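/- In the five-node network with Π having 3-cycle {0,2,4} and 2-cycle {1,3}, with |α| ∈ {0,1} (so x₀^{(1)} may be taken equal to x₀^{(2)}), the choice x_{2πν/3}^{(1)} = c + ν + 2f(ν) for ν ∈ {0,1,2}, c ∈ ℤ, f : {0,1,2} → ℤ, yields |⟨2|U(τ/2)|0⟩| = 1: the excitation is perfectly transferred from node 0 to node 2 at time τ/2 (and to node 4 at time τ). -/

import Mathlib

private lemma epi' (m : ℤ) : Complex.exp (m * (Real.pi * Complex.I)) = (-1) ^ m := by
  rw [Complex.exp_int_mul, Complex.exp_pi_mul_I]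

private lemma e2pi' (m : ℤ) : Complex.exp (m * (2 * Real.pi * Complex.I)) = 1 := by
  exact_mod_cast Complex.exp_int_mul_two_pi_mul_I m

private lemma hpow' (c k : ℤ) : (-1:ℂ)^(c + 2*k) = (-1)^c := by
  rw [zpow_add₀ (by norm_num : (-1:ℂ) ≠ 0), zpow_mul]; norm_num




/-- In the five-node network with `P` having 3-cycle `{0,2,4}` and 2-cycle `{1,3}`, with
`|α| ∈ {0,1}` (so `x₀⁽¹⁾` may be taken equal to `x₀⁽²⁾`), the choice
`x_{2πν/3}⁽¹⁾ = c + ν + 2f(ν)` for `ν ∈ {0,1,2}` yields `|⟨2|U(τ/2)|0⟩| = 1`: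
the excitation is perfectly transferred from node `0` to node `2` at time `τ/2` (and to
node `4` at time `τ`). -/
theorem stmt_16
    (e : Fin 5 → (Fin 5 → ℂ)) (he : ∀ k, e k = Pi.single k 1)
    (α β : ℂ) (hαβ : ‖α‖ ^ 2 + ‖β‖ ^ 2 = 1)
    (hα : ‖α‖ = 0 ∨ ‖α‖ = 1)
    (v00 v10 v1pi v0a v0b : Fin 5 → ℂ)
    (hv00 : v00 = ((1 / Real.sqrt 3 : ℝ) : ℂ) • (e 0 + e 2 + e 4))
    (hv10 : v10 = ((1 / Real.sqrt 2 : ℝ) : ℂ) • (e 1 + e 3))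
    (hv1pi : v1pi = ((1 / Real.sqrt 2 : ℝ) : ℂ) • (e 1 - e 3))
    (hv0a : v0a = ((1 / Real.sqrt 3 : ℝ) : ℂ) •
      (e 0 + Complex.exp (2 * Real.pi * Complex.I / 3) • e 2 +
        Complex.exp (4 * Real.pi * Complex.I / 3) • e 4))
    (hv0b : v0b = ((1 / Real.sqrt 3 : ℝ) : ℂ) •
      (e 0 + Complex.exp (4 * Real.pi * Complex.I / 3) • e 2 +
        Complex.exp (8 * Real.pi * Complex.I / 3) • e 4))
    (y : Fin 5 → (Fin 5 → ℂ))
    (hy : y = ![α • v00 + β • v10, (starRingEnd ℂ β) • v00 - (starRingEnd ℂ α) • v10,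
      v1pi, v0a, v0b])
    (c : ℤ) (f : Fin 3 → ℤ)
    (x01 x02 xpi xa xb : ℤ)
    (hx01 : x01 = c + 0 + 2 * f 0) (hx02 : x02 = x01)
    (hxa : xa = c + 1 + 2 * f 1) (hxb : xb = c + 2 + 2 * f 2)
    (τ : ℝ) (hτ : 0 < τ)
    (ε : Fin 5 → ℝ)
    (hε : ε = ![2 * Real.pi * (x01 : ℝ), 2 * Real.pi * (x02 : ℝ),
      -Real.pi + 2 * Real.pi * (xpi : ℝ),
      -(2 * Real.pi / 3) + 2 * Real.pi * (xa : ℝ),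
      -(4 * Real.pi / 3) + 2 * Real.pi * (xb : ℝ)])
    (U : ℝ → Matrix (Fin 5) (Fin 5) ℂ)
    (hU : ∀ t : ℝ, U t = ∑ i : Fin 5,
      Complex.exp (-(Complex.I * ((ε i : ℂ)) * (t : ℂ) / (τ : ℂ))) •
        Matrix.vecMulVec (y i) (star (y i))) :
    ‖dotProduct (star (e 2)) ((U (τ / 2)).mulVec (e 0))‖ = 1 ∧
    ‖dotProduct (star (e 4)) ((U τ).mulVec (e 0))‖ = 1 := by

  subst hx01 hx02 hxa hxb
  have hτ0 : (τ:ℂ) ≠ 0 := Complex.ofReal_ne_zero.2 hτ.ne'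
  set s3 : ℂ := ((1/Real.sqrt 3 : ℝ) : ℂ) with hs3def
  have hs3c : (starRingEnd ℂ) s3 = s3 := Complex.conj_ofReal _
  have hs3sq : s3 * s3 = 1/3 := by
    have h : (1/Real.sqrt 3) * (1/Real.sqrt 3) = 1/3 := by
      rw [div_mul_div_comm, one_mul, Real.mul_self_sqrt (by norm_num : (0:ℝ) ≤ 3)]
    rw [hs3def, ← Complex.ofReal_mul, h]
    norm_num
  have entry : ∀ (t : ℝ) (a : Fin 5),
      dotProduct (star (e a)) ((U t).mulVec (e 0)) =
      ∑ i : Fin 5, Complex.exp (-(Complex.I * ((ε i : ℂ)) * (t : ℂ) / (τ : ℂ))) *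
        (y i a * (starRingEnd ℂ) (y i 0)) := by
    intro t a
    have hstar : star (Pi.single a 1 : Fin 5 → ℂ) = Pi.single a 1 := by
      funext j; simp [Pi.single_apply, apply_ite]
    rw [he, he, hstar, Matrix.mulVec_single, single_dotProduct, hU]
    simp [Matrix.sum_apply, Matrix.vecMulVec_apply, mul_comm, mul_assoc]
  -- component values
  have hy00 : y 0 0 = α * s3 := by
    rw [hy]; simp [hv00, hv10, he, Pi.single_apply, mul_comm]
  have hy02 : y 0 2 = α * s3 := by
    rw [hy]; simp [hv00, hv10, he, Pi.single_apply, mul_comm]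
  have hy04 : y 0 4 = α * s3 := by
    rw [hy]; simp [hv00, hv10, he, Pi.single_apply, mul_comm]
  have hy10 : y 1 0 = (starRingEnd ℂ) β * s3 := by
    rw [hy]; simp [hv00, hv10, he, Pi.single_apply, mul_comm]
  have hy12 : y 1 2 = (starRingEnd ℂ) β * s3 := by
    rw [hy]; simp [hv00, hv10, he, Pi.single_apply, mul_comm]
  have hy14 : y 1 4 = (starRingEnd ℂ) β * s3 := by
    rw [hy]; simp [hv00, hv10, he, Pi.single_apply, mul_comm]
  have hy20 : y 2 0 = 0 := by
    rw [hy]; simp [hv1pi, he, Pi.single_apply]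
  have hy30 : y 3 0 = s3 := by
    rw [hy]; simp [hv0a, he, Pi.single_apply]
  have hy32 : y 3 2 = s3 * Complex.exp (2 * Real.pi * Complex.I / 3) := by
    rw [hy]; simp [hv0a, he, Pi.single_apply]
  have hy34 : y 3 4 = s3 * Complex.exp (4 * Real.pi * Complex.I / 3) := by
    rw [hy]; simp [hv0a, he, Pi.single_apply]
  have hy40 : y 4 0 = s3 := by
    rw [hy]; simp [hv0b, he, Pi.single_apply]
  have hy42 : y 4 2 = s3 * Complex.exp (4 * Real.pi * Complex.I / 3) := by
    rw [hy]; simp [hv0b, he, Pi.single_apply]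
  have hy44 : y 4 4 = s3 * Complex.exp (8 * Real.pi * Complex.I / 3) := by
    rw [hy]; simp [hv0b, he, Pi.single_apply]
  have hε0 : ε 0 = 2 * Real.pi * ((c + 0 + 2 * f 0 : ℤ) : ℝ) := by rw [hε]; rfl
  have hε1 : ε 1 = 2 * Real.pi * ((c + 0 + 2 * f 0 : ℤ) : ℝ) := by rw [hε]; rfl
  have hε3 : ε 3 = -(2 * Real.pi / 3) + 2 * Real.pi * ((c + 1 + 2 * f 1 : ℤ) : ℝ) := by
    rw [hε]; rfl
  have hε4 : ε 4 = -(4 * Real.pi / 3) + 2 * Real.pi * ((c + 2 + 2 * f 2 : ℤ) : ℝ) := by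
    rw [hε]; rfl
  have hαc : α * (starRingEnd ℂ) α = ((‖α‖ ^ 2 : ℝ) : ℂ) := by
    rw [Complex.mul_conj, Complex.sq_norm]
  have hβc : β * (starRingEnd ℂ) β = ((‖β‖ ^ 2 : ℝ) : ℂ) := by
    rw [Complex.mul_conj, Complex.sq_norm]
  have habs : ((‖α‖ ^ 2 : ℝ) : ℂ) + ((‖β‖ ^ 2 : ℝ) : ℂ) = 1 := by
    rw [← Complex.ofReal_add, hαβ, Complex.ofReal_one]
  constructor
  · rw [entry (τ/2) 2, Fin.sum_univ_five, hy00, hy02, hy10, hy12, hy20, hy30, hy32,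
      hy40, hy42, hε0, hε1, hε3, hε4]
    have final :
        Complex.exp (-(Complex.I * ((2 * Real.pi * ((c + 0 + 2 * f 0 : ℤ) : ℝ) : ℝ) : ℂ) * ((τ/2 : ℝ) : ℂ) / (τ : ℂ))) * (α * s3 * (starRingEnd ℂ) (α * s3)) +
        Complex.exp (-(Complex.I * ((2 * Real.pi * ((c + 0 + 2 * f 0 : ℤ) : ℝ) : ℝ) : ℂ) * ((τ/2 : ℝ) : ℂ) / (τ : ℂ))) * ((starRingEnd ℂ) β * s3 * (starRingEnd ℂ) ((starRingEnd ℂ) β * s3)) +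
        Complex.exp (-(Complex.I * ((ε 2 : ℝ) : ℂ) * ((τ/2 : ℝ) : ℂ) / (τ : ℂ))) * (y 2 2 * (starRingEnd ℂ) 0) +
        Complex.exp (-(Complex.I * ((-(2 * Real.pi / 3) + 2 * Real.pi * ((c + 1 + 2 * f 1 : ℤ) : ℝ) : ℝ) : ℂ) * ((τ/2 : ℝ) : ℂ) / (τ : ℂ))) * (s3 * Complex.exp (2 * (Real.pi:ℂ) * Complex.I / 3) * (starRingEnd ℂ) s3) +
        Complex.exp (-(Complex.I * ((-(4 * Real.pi / 3) + 2 * Real.pi * ((c + 2 + 2 * f 2 : ℤ) : ℝ) : ℝ) : ℂ) * ((τ/2 : ℝ) : ℂ) / (τ : ℂ))) * (s3 * Complex.exp (4 * (Real.pi:ℂ) * Complex.I / 3) * (starRingEnd ℂ) s3)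
        = (-1 : ℂ) ^ c := by
      rw [show (-(Complex.I * ((2 * Real.pi * ((c + 0 + 2 * f 0 : ℤ) : ℝ) : ℝ) : ℂ) * ((τ/2 : ℝ) : ℂ) / (τ : ℂ))) = ((c + 2*(-(c + f 0)) : ℤ) : ℂ) * (Real.pi * Complex.I) from by push_cast; field_simp; ring, epi', hpow']
      rw [show Complex.exp (-(Complex.I * ((-(2 * Real.pi / 3) + 2 * Real.pi * ((c + 1 + 2 * f 1 : ℤ) : ℝ) : ℝ) : ℂ) * ((τ/2 : ℝ) : ℂ) / (τ : ℂ))) * (s3 * Complex.exp (2 * (Real.pi:ℂ) * Complex.I / 3) * (starRingEnd ℂ) s3) = (Complex.exp (-(Complex.I * ((-(2 * Real.pi / 3) + 2 * Real.pi * ((c + 1 + 2 * f 1 : ℤ) : ℝ) : ℝ) : ℂ) * ((τ/2 : ℝ) : ℂ) / (τ : ℂ))) * Complex.exp (2 * (Real.pi:ℂ) * Complex.I / 3)) * (s3 * (starRingEnd ℂ) s3) from by ring,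
        ← Complex.exp_add,
        show (-(Complex.I * ((-(2 * Real.pi / 3) + 2 * Real.pi * ((c + 1 + 2 * f 1 : ℤ) : ℝ) : ℝ) : ℂ) * ((τ/2 : ℝ) : ℂ) / (τ : ℂ))) + 2 * (Real.pi:ℂ) * Complex.I / 3 = ((c + 2*(-(c + f 1)) : ℤ) : ℂ) * (Real.pi * Complex.I) from by push_cast; field_simp; ring, epi', hpow']
      rw [show Complex.exp (-(Complex.I * ((-(4 * Real.pi / 3) + 2 * Real.pi * ((c + 2 + 2 * f 2 : ℤ) : ℝ) : ℝ) : ℂ) * ((τ/2 : ℝ) : ℂ) / (τ : ℂ))) * (s3 * Complex.exp (4 * (Real.pi:ℂ) * Complex.I / 3) * (starRingEnd ℂ) s3) = (Complex.exp (-(Complex.I * ((-(4 * Real.pi / 3) + 2 * Real.pi * ((c + 2 + 2 * f 2 : ℤ) : ℝ) : ℝ) : ℂ) * ((τ/2 : ℝ) : ℂ) / (τ : ℂ))) * Complex.exp (4 * (Real.pi:ℂ) * Complex.I / 3)) * (s3 * (starRingEnd ℂ) s3) from by ring,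
        ← Complex.exp_add,
        show (-(Complex.I * ((-(4 * Real.pi / 3) + 2 * Real.pi * ((c + 2 + 2 * f 2 : ℤ) : ℝ) : ℝ) : ℂ) * ((τ/2 : ℝ) : ℂ) / (τ : ℂ))) + 4 * (Real.pi:ℂ) * Complex.I / 3 = ((c + 2*(-(c + f 2)) : ℤ) : ℂ) * (Real.pi * Complex.I) from by push_cast; field_simp; ring, epi', hpow']
      simp only [map_zero, mul_zero, map_mul, hs3c, Complex.conj_conj, add_zero]
      linear_combination ((-1:ℂ)^c * (s3*s3)) * hαc + ((-1:ℂ)^c * (s3*s3)) * hβc +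
        ((-1:ℂ)^c * (((‖α‖ ^ 2 : ℝ) : ℂ) + ((‖β‖ ^ 2 : ℝ) : ℂ) + 2)) * hs3sq +
        ((-1:ℂ)^c / 3) * habs
    rw [final, norm_zpow]
    simp
  · rw [entry τ 4, Fin.sum_univ_five, hy00, hy04, hy10, hy14, hy20, hy30, hy34,
      hy40, hy44, hε0, hε1, hε3, hε4]
    have final :
        Complex.exp (-(Complex.I * ((2 * Real.pi * ((c + 0 + 2 * f 0 : ℤ) : ℝ) : ℝ) : ℂ) * ((τ : ℝ) : ℂ) / (τ : ℂ))) * (α * s3 * (starRingEnd ℂ) (α * s3)) +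
        Complex.exp (-(Complex.I * ((2 * Real.pi * ((c + 0 + 2 * f 0 : ℤ) : ℝ) : ℝ) : ℂ) * ((τ : ℝ) : ℂ) / (τ : ℂ))) * ((starRingEnd ℂ) β * s3 * (starRingEnd ℂ) ((starRingEnd ℂ) β * s3)) +
        Complex.exp (-(Complex.I * ((ε 2 : ℝ) : ℂ) * ((τ : ℝ) : ℂ) / (τ : ℂ))) * (y 2 4 * (starRingEnd ℂ) 0) +
        Complex.exp (-(Complex.I * ((-(2 * Real.pi / 3) + 2 * Real.pi * ((c + 1 + 2 * f 1 : ℤ) : ℝ) : ℝ) : ℂ) * ((τ : ℝ) : ℂ) / (τ : ℂ))) * (s3 * Complex.exp (4 * (Real.pi:ℂ) * Complex.I / 3) * (starRingEnd ℂ) s3) +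
        Complex.exp (-(Complex.I * ((-(4 * Real.pi / 3) + 2 * Real.pi * ((c + 2 + 2 * f 2 : ℤ) : ℝ) : ℝ) : ℂ) * ((τ : ℝ) : ℂ) / (τ : ℂ))) * (s3 * Complex.exp (8 * (Real.pi:ℂ) * Complex.I / 3) * (starRingEnd ℂ) s3)
        = (1 : ℂ) := by
      rw [show (-(Complex.I * ((2 * Real.pi * ((c + 0 + 2 * f 0 : ℤ) : ℝ) : ℝ) : ℂ) * ((τ : ℝ) : ℂ) / (τ : ℂ))) = ((-(c + 0 + 2 * f 0) : ℤ) : ℂ) * (2 * Real.pi * Complex.I) from by push_cast; field_simp, e2pi']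
      rw [show Complex.exp (-(Complex.I * ((-(2 * Real.pi / 3) + 2 * Real.pi * ((c + 1 + 2 * f 1 : ℤ) : ℝ) : ℝ) : ℂ) * ((τ : ℝ) : ℂ) / (τ : ℂ))) * (s3 * Complex.exp (4 * (Real.pi:ℂ) * Complex.I / 3) * (starRingEnd ℂ) s3) = (Complex.exp (-(Complex.I * ((-(2 * Real.pi / 3) + 2 * Real.pi * ((c + 1 + 2 * f 1 : ℤ) : ℝ) : ℝ) : ℂ) * ((τ : ℝ) : ℂ) / (τ : ℂ))) * Complex.exp (4 * (Real.pi:ℂ) * Complex.I / 3)) * (s3 * (starRingEnd ℂ) s3) from by ring,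
        ← Complex.exp_add,
        show (-(Complex.I * ((-(2 * Real.pi / 3) + 2 * Real.pi * ((c + 1 + 2 * f 1 : ℤ) : ℝ) : ℝ) : ℂ) * ((τ : ℝ) : ℂ) / (τ : ℂ))) + 4 * (Real.pi:ℂ) * Complex.I / 3 = ((-(c + f 1 + f 1) : ℤ) : ℂ) * (2 * Real.pi * Complex.I) from by push_cast; field_simp; ring, e2pi']
      rw [show Complex.exp (-(Complex.I * ((-(4 * Real.pi / 3) + 2 * Real.pi * ((c + 2 + 2 * f 2 : ℤ) : ℝ) : ℝ) : ℂ) * ((τ : ℝ) : ℂ) / (τ : ℂ))) * (s3 * Complex.exp (8 * (Real.pi:ℂ) * Complex.I / 3) * (starRingEnd ℂ) s3) = (Complex.exp (-(Complex.I * ((-(4 * Real.pi / 3) + 2 * Real.pi * ((c + 2 + 2 * f 2 : ℤ) : ℝ) : ℝ) : ℂ) * ((τ : ℝ) : ℂ) / (τ : ℂ))) * Complex.exp (8 * (Real.pi:ℂ) * Complex.I / 3)) * (s3 * (starRingEnd ℂ) s3) from by ring,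
        ← Complex.exp_add,
        show (-(Complex.I * ((-(4 * Real.pi / 3) + 2 * Real.pi * ((c + 2 + 2 * f 2 : ℤ) : ℝ) : ℝ) : ℂ) * ((τ : ℝ) : ℂ) / (τ : ℂ))) + 8 * (Real.pi:ℂ) * Complex.I / 3 = ((-(c + f 2 + f 2) : ℤ) : ℂ) * (2 * Real.pi * Complex.I) from by push_cast; field_simp; ring, e2pi']
      simp only [map_zero, mul_zero, map_mul, hs3c, Complex.conj_conj, add_zero, one_mul]
      linear_combination ((s3*s3)) * hαc + ((s3*s3)) * hβc +
        ((((‖α‖ ^ 2 : ℝ) : ℂ) + ((‖β‖ ^ 2 : ℝ) : ℂ) + 2)) * hs3sq +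
        (1/3 : ℂ) * habs
    rw [final]
    simp
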